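/- Let A and B be finite lists of complex numbers, let α, β be complex numbers, let X be real with 0 < X < 1, and let m, n ≥ 0 be integers. Then (A ∪ {−β})(m)·(B ∪ {−α})(n) − X^{−α−β}·(A ∪ {−β})(m−1)·(B ∪ {−α})(n−1) = (A ∪ {−β})(m)·B(n) + A(m)·(B ∪ {−α})(n) − A(m)·B(n), where by convention a coefficient at argument −1 is 0. -/

import Mathlib

open scoped BigOperators

/-- The complex power `X ^ w := exp(w · log X)` of a real number `X`. -/
noncomputable def cpowX (X : ℝ) (w : ℂ) : ℂ := Complex.exp (w * (Real.log X : ℂ))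

/-- The local divisor coefficient `A(n) = Σ_{n₁+⋯+n_k = n} X^{a₁n₁+⋯+a_k n_k}` attached to a
finite list `A` of complex shifts; it is `0` for negative `n`. -/
noncomputable def locCoeff (X : ℝ) (A : List ℂ) (n : ℤ) : ℂ :=
  if 0 ≤ n then
    ∑ t ∈ Finset.Nat.antidiagonalTuple A.length n.toNat,
      cpowX X (∑ i : Fin A.length, A.get i * (t i : ℂ))
  else 0

lemma cpowX_add (X : ℝ) (a b : ℂ) : cpowX X (a + b) = cpowX X a * cpowX X b := by
  simp [cpowX, add_mul, Complex.exp_add]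

lemma cpowX_nat_mul (X : ℝ) (a : ℂ) (b : ℕ) : cpowX X (a * b) = cpowX X a ^ b := by
  rw [cpowX, cpowX, ← Complex.exp_nat_mul]
  ring_nf

lemma sum_adT_cast {M : Type*} [AddCommMonoid M] {j k : ℕ} (h : j = k) (n : ℕ)
    (f : (Fin j → ℕ) → M) :
    ∑ t ∈ Finset.Nat.antidiagonalTuple j n, f t
      = ∑ t ∈ Finset.Nat.antidiagonalTuple k n, f (t ∘ Fin.cast h) := by
  subst h; rfl

lemma sum_adT_snoc {M : Type*} [AddCommMonoid M] (k n : ℕ) (f : (Fin (k+1) → ℕ) → M) :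
    ∑ t ∈ Finset.Nat.antidiagonalTuple (k+1) n, f t
      = ∑ p ∈ Finset.HasAntidiagonal.antidiagonal n, ∑ s ∈ Finset.Nat.antidiagonalTuple k p.1,
          f (Fin.snoc s p.2) := by
  rw [Finset.sum_sigma']
  refine Finset.sum_nbij'
    (i := fun t => (⟨(∑ i : Fin k, t i.castSucc, t (Fin.last k)), Fin.init t⟩ :
      (p : ℕ × ℕ) × (Fin k → ℕ)))
    (j := fun q => Fin.snoc q.2 q.1.2) ?_ ?_ ?_ ?_ ?_
  · intro t ht
    rw [Finset.Nat.mem_antidiagonalTuple] at ht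
    simp only [Finset.mem_sigma, Finset.HasAntidiagonal.mem_antidiagonal, Finset.Nat.mem_antidiagonalTuple]
    exact ⟨by rw [← ht, Fin.sum_univ_castSucc], rfl⟩
  · intro q hq
    simp only [Finset.mem_sigma, Finset.HasAntidiagonal.mem_antidiagonal,
      Finset.Nat.mem_antidiagonalTuple] at hq
    rw [Finset.Nat.mem_antidiagonalTuple, Fin.sum_univ_castSucc]
    simp [hq.2, hq.1]
  · intro t ht
    exact Fin.snoc_init_self t
  · intro q hq
    simp only [Finset.mem_sigma, Finset.HasAntidiagonal.mem_antidiagonal,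
      Finset.Nat.mem_antidiagonalTuple] at hq
    refine Sigma.ext ?_ (heq_of_eq (by simp))
    simp [hq.2]
  · intro t ht
    exact congrArg f (Fin.snoc_init_self t).symm

lemma length_app (A : List ℂ) (γ : ℂ) : (A ++ [γ]).length = A.length + 1 := by simp

lemma locCoeff_append (X : ℝ) (A : List ℂ) (γ : ℂ) (m : ℕ) :
    locCoeff X (A ++ [γ]) (m : ℤ) =
      ∑ p ∈ Finset.HasAntidiagonal.antidiagonal m, locCoeff X A (p.1 : ℤ) * (cpowX X γ) ^ p.2 := by
  have hk := length_app A γ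
  simp only [locCoeff, if_pos (Int.natCast_nonneg _), Int.toNat_natCast]
  rw [sum_adT_cast hk, sum_adT_snoc]
  refine Finset.sum_congr rfl fun p hp => ?_
  rw [Finset.sum_mul]
  refine Finset.sum_congr rfl fun s hs => ?_
  have reindex : ∑ i : Fin (A ++ [γ]).length,
      (A ++ [γ]).get i * (((Fin.snoc s p.2 : Fin (A.length+1) → ℕ) ∘ Fin.cast hk) i : ℂ)
    = ∑ i : Fin (A.length + 1),
      (A ++ [γ]).get (Fin.cast hk.symm i) * ((Fin.snoc s p.2 : Fin (A.length+1) → ℕ) i : ℂ) := by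
    refine Fintype.sum_equiv (finCongr hk) _ _ fun i => ?_
    simp [Fin.cast_cast]
  rw [reindex, Fin.sum_univ_castSucc]
  have h1 : ∀ i : Fin A.length,
      (A ++ [γ]).get (Fin.cast hk.symm i.castSucc) * ((Fin.snoc s p.2 : Fin (A.length+1) → ℕ) i.castSucc : ℂ)
        = A.get i * (s i : ℂ) := by
    intro i
    congr 1
    · simp [List.get_eq_getElem, List.getElem_append_left, i.isLt]
    · simp
  have h2 : (A ++ [γ]).get (Fin.cast hk.symm (Fin.last A.length)) *
      ((Fin.snoc s p.2 : Fin (A.length+1) → ℕ) (Fin.last A.length) : ℂ) = γ * p.2 := by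
    congr 1
    · simp [List.get_eq_getElem, Fin.last, List.getElem_append_right]
    · simp
  simp_rw [h1, h2]
  rw [cpowX_add, cpowX_nat_mul]

lemma locCoeff_zero (X : ℝ) (A : List ℂ) : locCoeff X A 0 = 1 := by
  simp [locCoeff, Finset.Nat.antidiagonalTuple_zero_right, cpowX]

lemma locCoeff_neg_one (X : ℝ) (A : List ℂ) : locCoeff X A (-1) = 0 := by
  simp [locCoeff]

lemma locCoeff_append_succ (X : ℝ) (A : List ℂ) (γ : ℂ) (m : ℕ) :
    locCoeff X (A ++ [γ]) ((m : ℤ) + 1) =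
      locCoeff X A ((m : ℤ) + 1) + cpowX X γ * locCoeff X (A ++ [γ]) (m : ℤ) := by
  have h1 : ((m : ℤ) + 1) = ((m + 1 : ℕ) : ℤ) := by push_cast; ring
  rw [h1, locCoeff_append, locCoeff_append, Finset.Nat.antidiagonal_succ',
    Finset.sum_cons, Finset.sum_map, Finset.mul_sum]
  simp only [Function.Embedding.prodMap, Function.Embedding.coeFn_mk, Prod.map,
    Function.Embedding.refl_apply, pow_zero, mul_one]
  congr 1
  exact Finset.sum_congr rfl fun p _ => by push_cast [pow_succ]; ring

/-- The coefficient identity used in Lemma 3: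
`(A∪{-β})(m)(B∪{-α})(n) - X^{-α-β}(A∪{-β})(m-1)(B∪{-α})(n-1)
 = (A∪{-β})(m)B(n) + A(m)(B∪{-α})(n) - A(m)B(n)`. -/
theorem stmt11 (A B : List ℂ) (α β : ℂ) (X : ℝ) (hX0 : 0 < X) (hX1 : X < 1) (m n : ℕ) :
    locCoeff X (A ++ [-β]) (m : ℤ) * locCoeff X (B ++ [-α]) (n : ℤ)
      - cpowX X (-α - β) * locCoeff X (A ++ [-β]) ((m : ℤ) - 1) *
          locCoeff X (B ++ [-α]) ((n : ℤ) - 1)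
    = locCoeff X (A ++ [-β]) (m : ℤ) * locCoeff X B (n : ℤ)
      + locCoeff X A (m : ℤ) * locCoeff X (B ++ [-α]) (n : ℤ)
      - locCoeff X A (m : ℤ) * locCoeff X B (n : ℤ) := by
  have hc : cpowX X (-α - β) = cpowX X (-α) * cpowX X (-β) := by
    rw [← cpowX_add]; ring_nf
  cases m with
  | zero =>
    cases n with
    | zero => simp [locCoeff_zero, locCoeff_neg_one]
    | succ n => simp [locCoeff_zero, locCoeff_neg_one]
  | succ m =>
    cases n with
    | zero =>
      simp [locCoeff_zero, locCoeff_neg_one]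
    | succ n =>
      have hm : ((m + 1 : ℕ) : ℤ) = (m : ℤ) + 1 := by push_cast; ring
      have hn : ((n + 1 : ℕ) : ℤ) = (n : ℤ) + 1 := by push_cast; ring
      have hm1 : ((m + 1 : ℕ) : ℤ) - 1 = (m : ℤ) := by push_cast; ring
      have hn1 : ((n + 1 : ℕ) : ℤ) - 1 = (n : ℤ) := by push_cast; ring
      rw [hm1, hn1, hm, hn, locCoeff_append_succ, locCoeff_append_succ, hc]
      ring
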